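/- arXiv:2504.00323 — 2 statements merged into one kernel-verified Lean document; each statement's English description precedes it below -/
import Mathlib

section
/- With b_j = 1/(1 + T_j(w_0)), w_0 > 1, w_1 > 0, and coefficients μ_j = 2 w_0 b_j / b_{j−1}, ν_j = −b_j / b_{j−2}, μ̃_j = 2 w_1 b_j / b_{j−1}, the sequence defined by c_0 = 0, c_1 = w_1 b_1, and c_j = μ_j c_{j−1} + ν_j c_{j−2} + μ̃_j(1 − b_{j−1}) for j ≥ 2, satisfies c_j = w_1 b_j T_j′(w_0) for all j ≥ 0. -/
open Real

/-- Chebyshev polynomial of the first kind, as a real function. -/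
noncomputable def chebT : ℕ → ℝ → ℝ
  | 0, _ => 1
  | 1, x => x
  | (n+2), x => 2 * x * chebT (n+1) x - chebT n x

noncomputable def chebD : ℕ → ℝ → ℝ
  | 0, _ => 0
  | 1, _ => 1
  | (n+2), x => 2 * chebT (n+1) x + 2 * x * chebD (n+1) x - chebD n x

lemma chebT_zero : chebT 0 = fun _ => 1 := by funext x; rfl
lemma chebT_one : chebT 1 = fun x => x := by funext x; rfl
lemma chebT_add_two (n : ℕ) :
    chebT (n+2) = fun x => 2 * x * chebT (n+1) x - chebT n x := by funext x; rfl

lemma cheb_hasDerivAt : ∀ n x, HasDerivAt (chebT n) (chebD n x) x ∧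
    HasDerivAt (chebT (n+1)) (chebD (n+1) x) x := by
  intro n
  induction n with
  | zero =>
    intro x
    constructor
    · rw [chebT_zero]; simpa [chebD] using hasDerivAt_const x (1:ℝ)
    · rw [chebT_one]; simpa [chebD] using hasDerivAt_id' x
  | succ n ih =>
    intro x
    refine ⟨(ih x).2, ?_⟩
    rw [chebT_add_two]
    have h1 := (ih x).1
    have h2 := (ih x).2
    have hm : HasDerivAt (fun x => 2 * x * chebT (n+1) x)
        (2 * chebT (n+1) x + 2 * x * chebD (n+1) x) x := by
      have := ((hasDerivAt_id x).const_mul 2).mul h2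
      refine this.congr_deriv ?_
      simp only [id_eq]
      ring
    exact hm.sub h1

lemma chebT_ge_one {w0 : ℝ} (hw0 : 1 < w0) :
    ∀ n, 1 ≤ chebT n w0 ∧ chebT n w0 ≤ chebT (n+1) w0 := by
  intro n
  induction n with
  | zero => constructor <;> simp [chebT] <;> linarith
  | succ n ih =>
    obtain ⟨h1, h2⟩ := ih
    have h3 : 1 ≤ chebT (n+1) w0 := le_trans h1 h2
    refine ⟨h3, ?_⟩
    show chebT (n+1) w0 ≤ 2 * w0 * chebT (n+1) w0 - chebT n w0
    nlinarith

theorem stmt6 (w0 w1 : ℝ) (hw0 : 1 < w0) (hw1 : 0 < w1) (c : ℕ → ℝ)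
    (b : ℕ → ℝ) (hbdef : ∀ k, b k = 1 / (1 + chebT k w0))
    (hc0 : c 0 = 0) (hc1 : c 1 = w1 * b 1)
    (hcj : ∀ j : ℕ, 2 ≤ j →
      c j = (2 * w0 * b j / b (j-1)) * c (j-1)
          + (-(b j / b (j-2))) * c (j-2)
          + (2 * w1 * b j / b (j-1)) * (1 - b (j-1))) :
    ∀ j : ℕ, c j = w1 * b j * deriv (chebT j) w0 := by
  have hderiv : ∀ n, deriv (chebT n) w0 = chebD n w0 := fun n =>
    (cheb_hasDerivAt n w0).1.deriv
  have ht : ∀ k, (1 : ℝ) ≤ chebT k w0 := fun k => (chebT_ge_one hw0 k).1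
  have htne : ∀ k, 1 + chebT k w0 ≠ 0 := fun k => by have := ht k; positivity
  have key : ∀ j, c j = w1 * b j * chebD j w0 ∧
      c (j+1) = w1 * b (j+1) * chebD (j+1) w0 := by
    intro j
    induction j with
    | zero =>
      refine ⟨by simp [hc0, chebD], ?_⟩
      rw [hc1]; simp [chebD]
    | succ j ih =>
      obtain ⟨ih1, ih2⟩ := ih
      refine ⟨ih2, ?_⟩
      have h := hcj (j+2) (by omega)
      simp only [Nat.add_sub_cancel, show j + 2 - 1 = j + 1 from rfl] at h
      rw [h, ih1, ih2, hbdef j, hbdef (j+1), hbdef (j+2)]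
      have e0 := htne j
      have e1 := htne (j+1)
      have e2 := htne (j+2)
      have hD : chebD (j+2) w0 = 2 * chebT (j+1) w0 + 2 * w0 * chebD (j+1) w0 - chebD j w0 := rfl
      rw [hD]
      field_simp
      ring
  intro j
  rw [hderiv j]
  exact (key j).1
end

section
/- Under the hypotheses of the monotonic method construction (s ≥ 3, w_0 > 1, w_1 = (1 + T_{s−1}(w_0))/T_{s−1}′(w_0), b_j = 1/(1 + T_j(w_0)), γ_s = b_{s−1}/(2 s w_1), δ_s = −b_{s−1}/(2(s−2) w_1)), the polynomial R_s(x) = 1 + b_{s−1} x + (γ_s/b_s)(R̃_s(x) − 1) + (δ_s/b_{s−2})(R̃_{s−2}(x) − 1), where R̃_j(x) = 1 + b_j(T_j(w_0 + w_1 x) − T_j(w_0)), satisfies R_s′(x) = R̃_{s−1}(x) for all x. -/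
open Polynomial Polynomial.Chebyshev

noncomputable def chebU : ℕ → ℝ → ℝ
  | 0, _ => 1
  | 1, x => 2 * x
  | (n+2), x => 2 * x * chebU (n+1) x - chebU n x

lemma chebT_eval : ∀ (n : ℕ) (x : ℝ), chebT n x = (T ℝ n).eval x
  | 0, x => by simp [chebT, T_zero]
  | 1, x => by simp [chebT, T_one]
  | (n+2), x => by
    have h : ((n+2 : ℕ) : ℤ) = (n : ℤ) + 2 := by push_cast; ring
    rw [chebT, chebT_eval (n+1) x, chebT_eval n x, h, T_add_two]
    push_cast
    simp

lemma chebU_eval : ∀ (n : ℕ) (x : ℝ), chebU n x = (U ℝ n).eval x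
  | 0, x => by simp [chebU, U_zero]
  | 1, x => by simp [chebU, U_one]
  | (n+2), x => by
    have h : ((n+2 : ℕ) : ℤ) = (n : ℤ) + 2 := by push_cast; ring
    rw [chebU, chebU_eval (n+1) x, chebU_eval n x, h, U_add_two]
    push_cast
    simp

lemma hasDerivAt_chebT (n : ℕ) (y : ℝ) :
    HasDerivAt (chebT n) ((n : ℝ) * chebU (n-1) y) y := by
  have hfun : chebT n = fun x => (T ℝ n).eval x := funext (chebT_eval n)
  have hd := Polynomial.hasDerivAt (T ℝ (n : ℤ)) y
  rw [T_derivative_eq_U] at hd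
  rw [hfun]
  refine hd.congr_deriv ?_
  symm
  rcases n with _ | m
  · simp
  · have : ((m+1 : ℕ) : ℤ) - 1 = (m : ℤ) := by push_cast; ring
    rw [chebU_eval]
    simp [this]

-- growth lemmas
lemma chebT_ge (w0 : ℝ) (hw0 : 1 ≤ w0) :
    ∀ n, 1 ≤ chebT n w0 ∧ chebT n w0 ≤ chebT (n+1) w0
  | 0 => by simp [chebT]; exact hw0
  | 1 => by
      have h0 := chebT_ge w0 hw0 0
      constructor
      · simpa [chebT] using hw0
      · show w0 ≤ 2 * w0 * w0 - 1
        nlinarith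
  | (n+2) => by
      obtain ⟨h1, h2⟩ := chebT_ge w0 hw0 n
      obtain ⟨h3, h4⟩ := chebT_ge w0 hw0 (n+1)
      constructor
      · show (1:ℝ) ≤ 2 * w0 * chebT (n+1) w0 - chebT n w0
        nlinarith
      · show 2 * w0 * chebT (n+1) w0 - chebT n w0 ≤
          2 * w0 * chebT (n+2) w0 - chebT (n+1) w0
        have h5 : chebT (n+2) w0 = 2 * w0 * chebT (n+1) w0 - chebT n w0 := rfl
        nlinarith

lemma chebU_pos (w0 : ℝ) (hw0 : 1 ≤ w0) :
    ∀ n, 0 < chebU n w0 ∧ chebU n w0 ≤ chebU (n+1) w0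
  | 0 => by
      constructor
      · norm_num [chebU]
      · show (1:ℝ) ≤ 2 * w0; linarith
  | 1 => by
      constructor
      · show (0:ℝ) < 2 * w0; linarith
      · show 2 * w0 ≤ 2 * w0 * (2 * w0) - 1; nlinarith
  | (n+2) => by
      obtain ⟨h1, h2⟩ := chebU_pos w0 hw0 n
      obtain ⟨h3, h4⟩ := chebU_pos w0 hw0 (n+1)
      constructor
      · show (0:ℝ) < 2 * w0 * chebU (n+1) w0 - chebU n w0
        nlinarith
      · show 2 * w0 * chebU (n+1) w0 - chebU n w0 ≤
          2 * w0 * chebU (n+2) w0 - chebU (n+1) w0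
        have h5 : chebU (n+2) w0 = 2 * w0 * chebU (n+1) w0 - chebU n w0 := rfl
        nlinarith

-- key identity: U_{m+2} - U_m = 2 T_{m+2}
lemma key_U (m : ℕ) (u : ℝ) :
    chebU (m+2) u - chebU m u = 2 * chebT (m+2) u := by
  rw [chebU_eval, chebU_eval, chebT_eval]
  have h : ((m+2 : ℕ) : ℤ) = (m : ℤ) + 2 := by push_cast; ring
  rw [h]
  have h1 := U_add_two ℝ (m : ℤ)
  have h2 := T_eq_U_sub_X_mul_U ℝ ((m : ℤ) + 2)
  have h3 : ((m : ℤ) + 2 - 1) = (m : ℤ) + 1 := by ring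
  rw [h3] at h2
  have := congrArg (Polynomial.eval u) h1
  have := congrArg (Polynomial.eval u) h2
  simp only [eval_sub, eval_mul, eval_ofNat, eval_X] at *
  linarith

theorem stmt11 (s : ℕ) (hs : 3 ≤ s) (w0 : ℝ) (hw0 : 1 < w0) :
    let w1 : ℝ := (1 + chebT (s-1) w0) / deriv (chebT (s-1)) w0
    let b : ℕ → ℝ := fun k => 1 / (1 + chebT k w0)
    let γ : ℝ := b (s-1) / (2 * s * w1)
    let δ : ℝ := -(b (s-1)) / (2 * (s-2) * w1)
    let Rt : ℕ → ℝ → ℝ := fun k x => 1 + b k * (chebT k (w0 + w1 * x) - chebT k w0)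
    let R : ℝ → ℝ := fun x => 1 + b (s-1) * x
      + (γ / b s) * (Rt s x - 1) + (δ / b (s-2)) * (Rt (s-2) x - 1)
    ∀ x : ℝ, deriv R x = Rt (s-1) x := by
  obtain ⟨m, rfl⟩ : ∃ m, s = m + 3 := ⟨s - 3, by omega⟩
  intro w1 b γ δ Rt R x
  have hw0' : (1:ℝ) ≤ w0 := le_of_lt hw0
  have hTge : ∀ k, (1:ℝ) ≤ chebT k w0 := fun k => (chebT_ge w0 hw0' k).1
  have hb_ne : ∀ k, (1 + chebT k w0) ≠ 0 := fun k => by have := hTge k; linarith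
  have hD : deriv (chebT (m+2)) w0 = ((m+2:ℕ):ℝ) * chebU (m+1) w0 :=
    (hasDerivAt_chebT (m+2) w0).deriv
  have hUpos := (chebU_pos w0 hw0' (m+1)).1
  have hDpos : 0 < deriv (chebT (m+2)) w0 := by rw [hD]; positivity
  have hw1pos : 0 < w1 := by
    show 0 < (1 + chebT (m+3-1) w0) / deriv (chebT (m+3-1)) w0
    apply div_pos
    · have := hTge (m+2); show 0 < 1 + chebT (m+2) w0; linarith
    · exact hDpos
  have hw1 : w1 ≠ 0 := ne_of_gt hw1pos
  set u := w0 + w1 * x with hu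
  have haff : HasDerivAt (fun y : ℝ => w0 + w1 * y) w1 x := by
    simpa using ((hasDerivAt_id x).const_mul w1).const_add w0
  have hcomp : ∀ k : ℕ, HasDerivAt (fun y => chebT k (w0 + w1 * y))
      (((k:ℝ) * chebU (k-1) u) * w1) x :=
    fun k => (hasDerivAt_chebT k u).comp x haff
  have hRt : ∀ k : ℕ, HasDerivAt (Rt k) (b k * (((k:ℝ) * chebU (k-1) u) * w1)) x := by
    intro k
    show HasDerivAt (fun y => 1 + b k * (chebT k (w0 + w1 * y) - chebT k w0)) _ x
    exact (((hcomp k).sub_const (chebT k w0)).const_mul (b k)).const_add 1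
  have hR : HasDerivAt R (b (m+2)
      + (γ / b (m+3)) * (b (m+3) * ((((m+3:ℕ):ℝ) * chebU (m+2) u) * w1))
      + (δ / b (m+1)) * (b (m+1) * ((((m+1:ℕ):ℝ) * chebU m u) * w1))) x := by
    show HasDerivAt (fun x => 1 + b (m+2) * x
      + (γ / b (m+3)) * (Rt (m+3) x - 1) + (δ / b (m+1)) * (Rt (m+1) x - 1)) _ x
    have h1 : HasDerivAt (fun y : ℝ => 1 + b (m+2) * y) (b (m+2)) x := by
      simpa using ((hasDerivAt_id x).const_mul (b (m+2))).const_add 1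
    exact (h1.add (((hRt (m+3)).sub_const 1).const_mul (γ / b (m+3)))).add
      (((hRt (m+1)).sub_const 1).const_mul (δ / b (m+1)))
  rw [hR.deriv]
  show b (m+2)
      + (γ / b (m+3)) * (b (m+3) * ((((m+3:ℕ):ℝ) * chebU (m+2) u) * w1))
      + (δ / b (m+1)) * (b (m+1) * ((((m+1:ℕ):ℝ) * chebU m u) * w1))
    = 1 + b (m+2) * (chebT (m+2) u - chebT (m+2) w0)
  have hγ : γ = b (m+2) / (2 * ((m:ℝ)+3) * w1) := by
    show b (m+3-1) / (2 * ((m+3 : ℕ):ℝ) * w1) = _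
    push_cast; ring_nf
  have hδ : δ = -(b (m+2)) / (2 * ((m:ℝ)+1) * w1) := by
    show -(b (m+3-1)) / (2 * (((m+3 : ℕ):ℝ) - 2) * w1) = _
    push_cast; ring_nf
  rw [hγ, hδ]
  set A := chebU (m+2) u with hA
  set B := chebU m u with hB
  have hkey : chebT (m+2) u = (A - B) / 2 := by
    have := key_U m u; linarith
  rw [hkey]
  show (fun k => 1 / (1 + chebT k w0)) (m+2)
      + ((fun k => (1:ℝ) / (1 + chebT k w0)) (m+2) / (2 * ((m:ℝ)+3) * w1) / ((fun k => (1:ℝ) / (1 + chebT k w0)) (m+3))) * ((fun k => (1:ℝ) / (1 + chebT k w0)) (m+3) * ((((m+3:ℕ):ℝ) * A) * w1))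
      + (-((fun k => (1:ℝ) / (1 + chebT k w0)) (m+2)) / (2 * ((m:ℝ)+1) * w1) / ((fun k => (1:ℝ) / (1 + chebT k w0)) (m+1))) * ((fun k => (1:ℝ) / (1 + chebT k w0)) (m+1) * ((((m+1:ℕ):ℝ) * B) * w1))
    = 1 + (fun k => (1:ℝ) / (1 + chebT k w0)) (m+2) * ((A - B) / 2 - chebT (m+2) w0)
  simp only []
  have h2 := hb_ne (m+2)
  have h3 := hb_ne (m+3)
  have h1 := hb_ne (m+1)
  have hm3 : ((m:ℝ)+3) ≠ 0 := by positivity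
  have hm1 : ((m:ℝ)+1) ≠ 0 := by positivity
  push_cast
  field_simp
  ring
end
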